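/- A bounded operator J on L²(ℝ) is an operator of pointwise multiplication by some function h ∈ L∞(ℝ) if and only if for every pair of disjoint Borel sets A, B ⊂ ℝ one has M_{1_A} ∘ J ∘ M_{1_B} = 0. -/

import Mathlib

open MeasureTheory Filter Set
open scoped Real ENNReal ComplexConjugate

noncomputable section

open scoped Classical in
/-- Pointwise multiplication by the indicator function of `A` on `L²(ℝ)`. -/
def indMul (A : Set ℝ) (f : Lp ℂ 2 (volume : Measure ℝ)) : Lp ℂ 2 (volume : Measure ℝ) :=
  if hA : MeasurableSet A then
    ((Lp.memLp f).indicator hA).toLp (A.indicator (f : ℝ → ℂ))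
  else 0

namespace S10
local notation "H" => Lp ℂ 2 (volume : Measure ℝ)

lemma indMul_ae {A : Set ℝ} (hA : MeasurableSet A) (f : H) :
    (indMul A f : ℝ → ℂ) =ᵐ[volume] A.indicator (f : ℝ → ℂ) := by
  rw [indMul, dif_pos hA]; exact MemLp.coeFn_toLp _

lemma indMul_eq_self {B : Set ℝ} (hB : MeasurableSet B) {f : H}
    (hf : (f : ℝ → ℂ) =ᵐ[volume] B.indicator (f : ℝ → ℂ)) : indMul B f = f :=
  Lp.ext ((indMul_ae hB f).trans hf.symm)

variable {J : H →L[ℂ] H}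

def Hyp (J : H →L[ℂ] H) : Prop :=
  ∀ A B : Set ℝ, MeasurableSet A → MeasurableSet B → Disjoint A B →
      ∀ f : H, indMul A (J (indMul B f)) = 0

/-- If `f` is supported in `B`, then `J f` vanishes a.e. off `B`. -/
lemma supp_lemma (hJ : Hyp J) {B : Set ℝ} (hB : MeasurableSet B) {f : H}
    (hf : (f : ℝ → ℂ) =ᵐ[volume] B.indicator (f : ℝ → ℂ)) :
    ∀ᵐ x ∂(volume : Measure ℝ), x ∉ B → (J f : ℝ → ℂ) x = 0 := by
  have h0 : indMul Bᶜ (J (indMul B f)) = 0 :=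
    hJ Bᶜ B hB.compl hB disjoint_compl_left f
  rw [indMul_eq_self hB hf] at h0
  have h1 : (indMul Bᶜ (J f) : ℝ → ℂ) =ᵐ[volume] 0 := by
    rw [h0]; exact Lp.coeFn_zero _ _ _
  filter_upwards [indMul_ae hB.compl (J f), h1] with x hx h0x hxB
  have : Bᶜ.indicator (J f : ℝ → ℂ) x = (J f : ℝ → ℂ) x := Set.indicator_of_mem (Set.mem_compl hxB) _
  rw [← this, ← hx, h0x]; rfl

/-- `J` commutes with multiplication by indicators. -/
lemma comm_lemma (hJ : Hyp J) {A : Set ℝ} (hA : MeasurableSet A) (f : H) :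
    (J (indMul A f) : ℝ → ℂ) =ᵐ[volume] A.indicator (J f : ℝ → ℂ) := by
  have hsplit : f = indMul A f + indMul Aᶜ f := by
    refine Lp.ext ?_
    filter_upwards [Lp.coeFn_add (indMul A f) (indMul Aᶜ f), indMul_ae hA f,
      indMul_ae hA.compl f] with x hadd hx hx'
    rw [hadd, Pi.add_apply, hx, hx']
    by_cases hxA : x ∈ A
    · rw [Set.indicator_of_mem hxA, Set.indicator_of_notMem (by simpa using hxA), add_zero]
    · rw [Set.indicator_of_notMem hxA, Set.indicator_of_mem (by simpa using hxA), zero_add]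
  have hu : ∀ᵐ x ∂(volume : Measure ℝ), x ∉ A → (J (indMul A f) : ℝ → ℂ) x = 0 := by
    refine supp_lemma hJ hA ?_
    filter_upwards [indMul_ae hA f] with x hx
    by_cases hxA : x ∈ A
    · rw [Set.indicator_of_mem hxA]
    · rw [Set.indicator_of_notMem hxA, hx, Set.indicator_of_notMem hxA]
  have hv : ∀ᵐ x ∂(volume : Measure ℝ), x ∉ Aᶜ → (J (indMul Aᶜ f) : ℝ → ℂ) x = 0 := by
    refine supp_lemma hJ hA.compl ?_
    filter_upwards [indMul_ae hA.compl f] with x hx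
    by_cases hxA : x ∈ Aᶜ
    · rw [Set.indicator_of_mem hxA]
    · rw [Set.indicator_of_notMem hxA, hx, Set.indicator_of_notMem hxA]
  have hJf : (J f : ℝ → ℂ) =ᵐ[volume]
      fun x => (J (indMul A f) : ℝ → ℂ) x + (J (indMul Aᶜ f) : ℝ → ℂ) x := by
    conv_lhs => rw [hsplit]
    rw [map_add]
    exact Lp.coeFn_add _ _
  filter_upwards [hJf, hu, hv] with x hx hux hvx
  by_cases hxA : x ∈ A
  · rw [Set.indicator_of_mem hxA, hx, hvx (by simpa using hxA), add_zero]
  · rw [Set.indicator_of_notMem hxA, hux hxA]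

def eI (n : ℕ) : H :=
  indicatorConstLp 2 (measurableSet_Icc (a := -(n:ℝ)) (b := (n:ℝ)))
    (measure_Icc_lt_top).ne (1 : ℂ)

def gI (J : H →L[ℂ] H) (n : ℕ) : ℝ → ℂ := (J (eI n) : ℝ → ℂ)

lemma gI_meas (J : H →L[ℂ] H) (n : ℕ) : Measurable (gI J n) :=
  (Lp.stronglyMeasurable (J (eI n))).measurable

lemma indMul_eI {n : ℕ} {A : Set ℝ} (hA : MeasurableSet A)
    (hsub : A ⊆ Icc (-(n:ℝ)) n) :
    indMul A (eI n) =
      indicatorConstLp 2 hA ((measure_mono hsub).trans_lt measure_Icc_lt_top).ne (1 : ℂ) := by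
  refine Lp.ext ?_
  filter_upwards [indMul_ae hA (eI n), indicatorConstLp_coeFn (μ := (volume : Measure ℝ))
      (p := 2) (s := A) (hs := hA) (hμs := ((measure_mono hsub).trans_lt measure_Icc_lt_top).ne)
      (c := (1:ℂ)),
    indicatorConstLp_coeFn (μ := (volume : Measure ℝ)) (p := 2)
      (s := Icc (-(n:ℝ)) n) (hs := measurableSet_Icc) (hμs := measure_Icc_lt_top.ne)
      (c := (1:ℂ))] with x h1 h2 h3
  rw [h1, h2]
  by_cases hx : x ∈ A
  · rw [Set.indicator_of_mem hx, Set.indicator_of_mem hx, show ((eI n : H) : ℝ → ℂ) x = _ from h3,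
      Set.indicator_of_mem (hsub hx)]
  · rw [Set.indicator_of_notMem hx, Set.indicator_of_notMem hx]

lemma J_chi (hJ : Hyp J) {n : ℕ} {A : Set ℝ} (hA : MeasurableSet A)
    (hsub : A ⊆ Icc (-(n:ℝ)) n) :
    ((J (indicatorConstLp 2 hA ((measure_mono hsub).trans_lt measure_Icc_lt_top).ne (1 : ℂ))) :
        ℝ → ℂ) =ᵐ[volume] A.indicator (gI J n) := by
  rw [← indMul_eI hA hsub]
  exact comm_lemma hJ hA (eI n)

lemma gI_bound (hJ : Hyp J) (n : ℕ) :
    ∀ᵐ x ∂(volume : Measure ℝ), x ∈ Icc (-(n:ℝ)) n → ‖gI J n x‖ ≤ ‖J‖ := by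
  set C := ‖J‖ with hC
  have key : ∀ ε : ℝ, 0 < ε →
      volume {x | x ∈ Icc (-(n:ℝ)) n ∧ C + ε ≤ ‖gI J n x‖} = 0 := by
    intro ε hε
    set S := {x | x ∈ Icc (-(n:ℝ)) n ∧ C + ε ≤ ‖gI J n x‖} with hSdef
    have hSm : MeasurableSet S := by
      refine measurableSet_Icc.inter ?_
      exact measurableSet_le measurable_const (gI_meas J n).norm
    have hsub : S ⊆ Icc (-(n:ℝ)) n := fun x hx => hx.1
    have hSfin : volume S ≠ ∞ := ((measure_mono hsub).trans_lt measure_Icc_lt_top).ne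
    set χ : H := indicatorConstLp 2 hSm ((measure_mono hsub).trans_lt measure_Icc_lt_top).ne
      (1 : ℂ) with hχ
    set t : ℝ := (volume S).toReal ^ (1 / (2:ℝ)) with ht
    have ht0 : 0 ≤ t := Real.rpow_nonneg ENNReal.toReal_nonneg _
    have hupper : ‖J χ‖ ≤ C * t := by
      refine (J.le_opNorm χ).trans ?_
      rw [hχ, norm_indicatorConstLp two_ne_zero ENNReal.ofNat_ne_top, norm_one, one_mul,
        ENNReal.toReal_ofNat]
      exact le_rfl
    have hCε : ‖((C + ε : ℝ) : ℂ)‖ = C + ε := by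
      rw [Complex.norm_real]
      exact abs_of_nonneg (by positivity)
    have hmono : eLpNorm (S.indicator fun _ => ((C + ε : ℝ) : ℂ)) 2 volume ≤
        eLpNorm ((J χ : ℝ → ℂ)) 2 volume := by
      rw [eLpNorm_congr_ae (J_chi hJ hSm hsub)]
      refine eLpNorm_mono_ae (Eventually.of_forall fun x => ?_)
      by_cases hx : x ∈ S
      · rw [Set.indicator_of_mem hx, Set.indicator_of_mem hx, hCε]
        exact hx.2
      · rw [Set.indicator_of_notMem hx, Set.indicator_of_notMem hx]
    have hlower : (C + ε) * t ≤ ‖J χ‖ := by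
      have hfin : eLpNorm ((J χ : ℝ → ℂ)) 2 volume ≠ ∞ := Lp.eLpNorm_ne_top _
      have h3 := ENNReal.toReal_mono hfin hmono
      rw [eLpNorm_indicator_const hSm two_ne_zero ENNReal.ofNat_ne_top,
        ENNReal.toReal_mul, ENNReal.toReal_ofNat, ← ENNReal.toReal_rpow,
        toReal_enorm, hCε] at h3
      rw [Lp.norm_def]
      exact h3
    have htz : t = 0 := le_antisymm (by nlinarith) ht0
    have htr : (volume S).toReal = 0 :=
      ((Real.rpow_eq_zero_iff_of_nonneg ENNReal.toReal_nonneg).mp htz).1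
    rcases (ENNReal.toReal_eq_zero_iff _).mp htr with h | h
    · exact h
    · exact absurd h hSfin
  have hU : {x | x ∈ Icc (-(n:ℝ)) n ∧ C < ‖gI J n x‖} ⊆
      ⋃ k : ℕ, {x | x ∈ Icc (-(n:ℝ)) n ∧ C + 1 / ((k:ℝ) + 1) ≤ ‖gI J n x‖} := by
    intro x hx
    obtain ⟨k, hk⟩ := exists_nat_one_div_lt (sub_pos.mpr hx.2)
    exact mem_iUnion.mpr ⟨k, hx.1, by linarith⟩
  have h0 : volume {x | x ∈ Icc (-(n:ℝ)) n ∧ C < ‖gI J n x‖} = 0 :=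
    measure_mono_null hU (measure_iUnion_null fun k => key _ (by positivity))
  filter_upwards [measure_eq_zero_iff_ae_notMem.mp h0] with x hx hxI
  by_contra hlt
  exact hx ⟨hxI, not_le.mp hlt⟩

lemma gI_consistent (hJ : Hyp J) {m n : ℕ} (hmn : m ≤ n) :
    ∀ᵐ x ∂(volume : Measure ℝ), x ∈ Icc (-(m:ℝ)) m → gI J m x = gI J n x := by
  have hsub : Icc (-(m:ℝ)) m ⊆ Icc (-(n:ℝ)) n :=
    Icc_subset_Icc (neg_le_neg (Nat.cast_le.mpr hmn)) (Nat.cast_le.mpr hmn)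
  have he : eI m = indMul (Icc (-(m:ℝ)) m) (eI n) := by
    rw [indMul_eI measurableSet_Icc hsub]
    rfl
  have hcomm := comm_lemma hJ (measurableSet_Icc (a := -(m:ℝ)) (b := (m:ℝ))) (eI n)
  rw [← he] at hcomm
  filter_upwards [hcomm] with x hx hxm
  rw [gI, hx, Set.indicator_of_mem hxm]
  rfl

lemma gI_consistent' (hJ : Hyp J) (m n : ℕ) :
    ∀ᵐ x ∂(volume : Measure ℝ),
      x ∈ Icc (-(m:ℝ)) m → x ∈ Icc (-(n:ℝ)) n → gI J m x = gI J n x := by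
  filter_upwards [gI_consistent hJ (le_max_left m n), gI_consistent hJ (le_max_right m n)]
    with x h1 h2 hm hn
  have hm' : x ∈ Icc (-((max m n : ℕ):ℝ)) ((max m n : ℕ):ℝ) := by
    refine Icc_subset_Icc ?_ ?_ hm <;>
      [exact neg_le_neg (Nat.cast_le.mpr (le_max_left m n));
       exact Nat.cast_le.mpr (le_max_left m n)]
  rw [h1 hm, h2 hn]

def hFun (J : H →L[ℂ] H) : ℝ → ℂ := fun x => gI J (⌊|x|⌋₊ + 1) x

lemma mem_Icc_floor (x : ℝ) :
    x ∈ Icc (-((⌊|x|⌋₊ + 1 : ℕ):ℝ)) ((⌊|x|⌋₊ + 1 : ℕ):ℝ) := by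
  have h := Nat.lt_floor_add_one |x|
  have h2 : |x| ≤ ((⌊|x|⌋₊ + 1 : ℕ):ℝ) := by push_cast; linarith
  exact abs_le.mp h2

set_option maxHeartbeats 1000000 in
lemma hFun_meas (J : H →L[ℂ] H) : Measurable (hFun J) := by
  have h1 : Measurable fun x : ℝ => (x, (⌊|x|⌋₊ : ℕ)) :=
    measurable_id.prodMk (Nat.measurable_floor.comp continuous_abs.measurable)
  have h2 : Measurable fun p : ℝ × ℕ => gI J (p.2 + 1) p.1 :=
    measurable_from_prod_countable_left fun k => gI_meas J (k + 1)
  have h3 := h2.comp h1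
  exact h3

lemma hFun_eq_gI (hJ : Hyp J) (n : ℕ) :
    ∀ᵐ x ∂(volume : Measure ℝ), x ∈ Icc (-(n:ℝ)) n → hFun J x = gI J n x := by
  filter_upwards [ae_all_iff.mpr fun k : ℕ => gI_consistent' hJ (k + 1) n] with x hx hxn
  exact hx ⌊|x|⌋₊ (mem_Icc_floor x) hxn

lemma hFun_bound (hJ : Hyp J) :
    ∀ᵐ x ∂(volume : Measure ℝ), ‖hFun J x‖ ≤ ‖J‖ := by
  filter_upwards [ae_all_iff.mpr fun n : ℕ => gI_bound hJ n] with x hx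
  exact hx (⌊|x|⌋₊ + 1) (mem_Icc_floor x)

lemma hFun_mem (hJ : Hyp J) : MemLp (hFun J) ⊤ (volume : Measure ℝ) :=
  memLp_top_of_bound (hFun_meas J).aestronglyMeasurable ‖J‖ (hFun_bound hJ)

lemma mul_mem (hJ : Hyp J) (f : H) :
    MemLp (fun x => hFun J x * (f : ℝ → ℂ) x) 2 (volume : Measure ℝ) := by
  have := (Lp.memLp f).smul (hFun_mem hJ) (r := 2)
  exact this

def mulCLM (hJ : Hyp J) : H →L[ℂ] H :=
  LinearMap.mkContinuous
    { toFun := fun f => (mul_mem hJ f).toLp _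
      map_add' := by
        intro f g
        refine Lp.ext ?_
        filter_upwards [MemLp.coeFn_toLp (mul_mem hJ (f + g)),
          MemLp.coeFn_toLp (mul_mem hJ f), MemLp.coeFn_toLp (mul_mem hJ g),
          Lp.coeFn_add f g,
          Lp.coeFn_add ((mul_mem hJ f).toLp _) ((mul_mem hJ g).toLp _)] with x h1 h2 h3 h4 h5
        rw [h1, h5, Pi.add_apply, h2, h3, h4, Pi.add_apply, mul_add]
      map_smul' := by
        intro c f
        refine Lp.ext ?_
        filter_upwards [MemLp.coeFn_toLp (mul_mem hJ (c • f)),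
          MemLp.coeFn_toLp (mul_mem hJ f), Lp.coeFn_smul c f,
          Lp.coeFn_smul c ((mul_mem hJ f).toLp _)] with x h1 h2 h3 h4
        simp only [RingHom.id_apply]
        rw [h1, h4, Pi.smul_apply, h2, h3, Pi.smul_apply, smul_eq_mul, smul_eq_mul]
        ring }
    ‖J‖
    (by
      intro f
      simp only [LinearMap.coe_mk, AddHom.coe_mk]
      rw [Lp.norm_toLp _ (mul_mem hJ f)]
      have hb : eLpNorm (fun x => hFun J x * (f : ℝ → ℂ) x) 2 volume ≤
          ‖J‖₊ • eLpNorm (f : ℝ → ℂ) 2 volume := by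
        refine eLpNorm_le_nnreal_smul_eLpNorm_of_ae_le_mul ?_ 2
        filter_upwards [hFun_bound hJ] with x hx
        calc ‖hFun J x * (f : ℝ → ℂ) x‖₊ = ‖hFun J x‖₊ * ‖(f : ℝ → ℂ) x‖₊ := nnnorm_mul _ _
          _ ≤ ‖J‖₊ * ‖(f : ℝ → ℂ) x‖₊ := by
              refine mul_le_mul_of_nonneg_right ?_ zero_le
              rwa [← NNReal.coe_le_coe] at *
      have := ENNReal.toReal_mono ?_ hb
      · rw [ENNReal.smul_def, smul_eq_mul, ENNReal.toReal_mul, ENNReal.coe_toReal,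
          coe_nnnorm, ← Lp.norm_def] at this
        exact this
      · exact ENNReal.mul_ne_top ENNReal.coe_ne_top (Lp.eLpNorm_ne_top f))

lemma mulCLM_ae (hJ : Hyp J) (f : H) :
    ((mulCLM hJ f : H) : ℝ → ℂ) =ᵐ[volume] fun x => hFun J x * (f : ℝ → ℂ) x :=
  MemLp.coeFn_toLp (mul_mem hJ f)

lemma fin_inter {s : Set ℝ} (n : ℕ) :
    volume (s ∩ Icc (-(n:ℝ)) n) ≠ ∞ :=
  ((measure_mono inter_subset_right).trans_lt measure_Icc_lt_top).ne

/-- Core identity: `J` and `mulCLM` agree on indicators of truncated sets. -/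
lemma J_chi_trunc (hJ : Hyp J) {s : Set ℝ} (hs : MeasurableSet s) (n : ℕ) :
    J (indicatorConstLp 2 (hs.inter measurableSet_Icc) (fin_inter n) (1 : ℂ)) =
      mulCLM hJ (indicatorConstLp 2 (hs.inter measurableSet_Icc) (fin_inter n) (1 : ℂ)) := by
  set A := s ∩ Icc (-(n:ℝ)) n with hA
  have hAm : MeasurableSet A := hs.inter measurableSet_Icc
  have hsub : A ⊆ Icc (-(n:ℝ)) n := inter_subset_right
  refine Lp.ext ?_
  have h1 := J_chi hJ hAm hsub
  have h2 := mulCLM_ae hJ (indicatorConstLp 2 hAm (fin_inter n) (1 : ℂ))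
  have h3 := indicatorConstLp_coeFn (μ := (volume : Measure ℝ)) (p := 2) (s := A)
    (hs := hAm) (hμs := fin_inter n) (c := (1:ℂ))
  filter_upwards [h1, h2, h3, hFun_eq_gI hJ n] with x hx1 hx2 hx3 hx4
  rw [hx1, hx2, hx3]
  by_cases hxA : x ∈ A
  · rw [Set.indicator_of_mem hxA, Set.indicator_of_mem hxA, hx4 (hsub hxA), mul_one]
  · rw [Set.indicator_of_notMem hxA, Set.indicator_of_notMem hxA, mul_zero]

lemma chi_tendsto {s : Set ℝ} (hs : MeasurableSet s) (hμs : volume s ≠ ∞) :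
    Tendsto (fun n : ℕ =>
        (indicatorConstLp 2 (hs.inter measurableSet_Icc) (fin_inter n) (1 : ℂ) : H))
      atTop (nhds (indicatorConstLp 2 hs hμs (1 : ℂ))) := by
  have hdiff : ∀ n : ℕ,
      indicatorConstLp 2 hs hμs (1 : ℂ) -
          indicatorConstLp 2 (hs.inter measurableSet_Icc) (fin_inter n) (1 : ℂ) =
        indicatorConstLp 2 (hs.diff (measurableSet_Icc (a := -(n:ℝ)) (b := (n:ℝ))))
          ((measure_mono (diff_subset (t := Icc (-(n:ℝ)) (n:ℝ)))).trans_lt hμs.lt_top).ne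
          (1 : ℂ) := by
    intro n
    refine Lp.ext ?_
    filter_upwards [Lp.coeFn_sub (indicatorConstLp 2 hs hμs (1 : ℂ))
        (indicatorConstLp 2 (hs.inter measurableSet_Icc) (fin_inter n) (1 : ℂ)),
      indicatorConstLp_coeFn (hs := hs) (hμs := hμs) (c := (1:ℂ)),
      indicatorConstLp_coeFn (hs := hs.inter (measurableSet_Icc (a := -(n:ℝ)) (b := (n:ℝ))))
        (hμs := fin_inter n) (c := (1:ℂ)),
      indicatorConstLp_coeFn (hs := hs.diff (measurableSet_Icc (a := -(n:ℝ)) (b := (n:ℝ))))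
        (hμs := ((measure_mono diff_subset).trans_lt hμs.lt_top).ne) (c := (1:ℂ))]
      with x h1 h2 h3 h4
    rw [h1, Pi.sub_apply, h2, h3, h4]
    by_cases hxs : x ∈ s
    · by_cases hxI : x ∈ Icc (-(n:ℝ)) n
      · rw [Set.indicator_of_mem hxs, Set.indicator_of_mem (mem_inter hxs hxI),
          Set.indicator_of_notMem
            (fun h : x ∈ s \ Icc (-(n:ℝ)) n => h.2 hxI), sub_self]
      · rw [Set.indicator_of_mem hxs,
          Set.indicator_of_notMem (fun h : x ∈ s ∩ Icc (-(n:ℝ)) n => hxI h.2),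
          Set.indicator_of_mem (mem_diff_of_mem hxs hxI), sub_zero]
    · rw [Set.indicator_of_notMem hxs,
        Set.indicator_of_notMem (fun h : x ∈ s ∩ Icc (-(n:ℝ)) n => hxs h.1),
        Set.indicator_of_notMem (fun h : x ∈ s \ Icc (-(n:ℝ)) n => hxs h.1), sub_self]
  have hmeas : Tendsto (fun n : ℕ => volume (s \ Icc (-(n:ℝ)) n)) atTop (nhds 0) := by
    have hanti : Antitone fun n : ℕ => s \ Icc (-(n:ℝ)) n := by
      intro m n hmn
      refine diff_subset_diff_right (Icc_subset_Icc ?_ ?_) <;>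
        [exact neg_le_neg (Nat.cast_le.mpr hmn); exact Nat.cast_le.mpr hmn]
    have hempty : (⋂ n : ℕ, s \ Icc (-(n:ℝ)) n) = ∅ := by
      ext x
      simp only [mem_iInter, mem_diff, mem_empty_iff_false, iff_false, not_forall]
      exact ⟨⌊|x|⌋₊ + 1, fun h => h.2 (mem_Icc_floor x)⟩
    have := tendsto_measure_iInter_atTop
      (μ := (volume : Measure ℝ)) (s := fun n : ℕ => s \ Icc (-(n:ℝ)) n)
      (fun n => (hs.diff measurableSet_Icc).nullMeasurableSet) hanti
      ⟨0, ((measure_mono diff_subset).trans_lt hμs.lt_top).ne⟩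
    rwa [hempty, measure_empty] at this
  have hnorm : Tendsto (fun n : ℕ => (volume (s \ Icc (-(n:ℝ)) n)).toReal ^ (1 / (2:ℝ)))
      atTop (nhds 0) := by
    have h1 : Tendsto (fun n : ℕ => (volume (s \ Icc (-(n:ℝ)) n)).toReal) atTop (nhds 0) := by
      have := (ENNReal.tendsto_toReal (ENNReal.zero_ne_top)).comp hmeas
      simpa [Function.comp_def] using this
    have h2 := h1.rpow_const (p := 1 / (2:ℝ)) (Or.inr (by norm_num))
    rwa [Real.zero_rpow (by norm_num : (1:ℝ)/2 ≠ 0)] at h2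
  rw [tendsto_iff_norm_sub_tendsto_zero]
  refine hnorm.congr fun n => ?_
  rw [norm_sub_rev, hdiff n, norm_indicatorConstLp two_ne_zero ENNReal.ofNat_ne_top, norm_one,
    one_mul, ENNReal.toReal_ofNat]
  rfl

lemma smul_chi {s : Set ℝ} (hs : MeasurableSet s) (hμs : volume s ≠ ∞) (c : ℂ) :
    indicatorConstLp 2 hs hμs c = c • indicatorConstLp 2 hs hμs (1 : ℂ) := by
  refine Lp.ext ?_
  filter_upwards [indicatorConstLp_coeFn (hs := hs) (hμs := hμs) (c := c),
    indicatorConstLp_coeFn (hs := hs) (hμs := hμs) (c := (1:ℂ)),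
    Lp.coeFn_smul c (indicatorConstLp 2 hs hμs (1 : ℂ))] with x h1 h2 h3
  rw [h1, h3, Pi.smul_apply, h2]
  by_cases hxs : x ∈ s
  · rw [Set.indicator_of_mem hxs, Set.indicator_of_mem hxs, smul_eq_mul, mul_one]
  · rw [Set.indicator_of_notMem hxs, Set.indicator_of_notMem hxs, smul_eq_mul, mul_zero]

lemma J_eq_mulCLM (hJ : Hyp J) (f : H) : J f = mulCLM hJ f := by
  induction f using Lp.induction (hp_ne_top := ENNReal.ofNat_ne_top (n := 2)) with
  | indicatorConst c hs hμs =>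
    rw [Lp.simpleFunc.coe_indicatorConst, smul_chi hs hμs.ne c, J.map_smul, (mulCLM hJ).map_smul]
    have hkey : J (indicatorConstLp 2 hs hμs.ne (1:ℂ)) =
        mulCLM hJ (indicatorConstLp 2 hs hμs.ne (1:ℂ)) := by
      have h1 : Tendsto (fun n : ℕ => J
          (indicatorConstLp 2 (hs.inter measurableSet_Icc) (fin_inter n) (1 : ℂ))) atTop
          (nhds (J (indicatorConstLp 2 hs hμs.ne (1:ℂ)))) :=
        (J.continuous.tendsto _).comp (chi_tendsto hs hμs.ne)
      have h2 : Tendsto (fun n : ℕ => mulCLM hJ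
          (indicatorConstLp 2 (hs.inter measurableSet_Icc) (fin_inter n) (1 : ℂ))) atTop
          (nhds (mulCLM hJ (indicatorConstLp 2 hs hμs.ne (1:ℂ)))) :=
        ((mulCLM hJ).continuous.tendsto _).comp (chi_tendsto hs hμs.ne)
      have h3 : (fun n : ℕ => J
          (indicatorConstLp 2 (hs.inter measurableSet_Icc) (fin_inter n) (1 : ℂ))) =
          fun n : ℕ => mulCLM hJ
          (indicatorConstLp 2 (hs.inter measurableSet_Icc) (fin_inter n) (1 : ℂ)) :=
        funext fun n => J_chi_trunc hJ hs n
      rw [h3] at h1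
      exact tendsto_nhds_unique h1 h2
    rw [hkey]
  | add hf hg hdisj hPf hPg =>
    rw [map_add, map_add, hPf, hPg]
  | isClosed =>
    exact isClosed_eq J.continuous (mulCLM hJ).continuous

end S10

/-- a bounded operator `J` on `L²(ℝ)` is multiplication by some
`h ∈ L∞(ℝ)` iff `M_{1_A} J M_{1_B} = 0` for all disjoint Borel sets `A, B ⊂ ℝ`. -/
theorem statement10
    (J : (Lp ℂ 2 (volume : Measure ℝ)) →L[ℂ] (Lp ℂ 2 (volume : Measure ℝ))) :
    (∃ h : ℝ → ℂ, MemLp h ⊤ (volume : Measure ℝ) ∧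
      ∀ f : Lp ℂ 2 (volume : Measure ℝ),
        (J f : ℝ → ℂ) =ᵐ[volume] fun x : ℝ => h x * (f : ℝ → ℂ) x) ↔
    (∀ A B : Set ℝ, MeasurableSet A → MeasurableSet B → Disjoint A B →
      ∀ f : Lp ℂ 2 (volume : Measure ℝ), indMul A (J (indMul B f)) = 0) := by
  constructor
  · rintro ⟨h, hmem, hmul⟩ A B hA hB hAB f
    rw [Lp.eq_zero_iff_ae_eq_zero]
    filter_upwards [S10.indMul_ae hA (J (indMul B f)), hmul (indMul B f),
      S10.indMul_ae hB f] with x h1 h2 h3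
    rw [h1]
    by_cases hxA : x ∈ A
    · rw [Set.indicator_of_mem hxA, h2, h3,
        Set.indicator_of_notMem (disjoint_left.mp hAB hxA), mul_zero]
      rfl
    · rw [Set.indicator_of_notMem hxA]
      rfl
  · intro hJ
    refine ⟨S10.hFun J, S10.hFun_mem hJ, fun f => ?_⟩
    rw [S10.J_eq_mulCLM hJ f]
    exact S10.mulCLM_ae hJ f
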